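/- Let W be an N×N real matrix with 1ᵀW = 1ᵀ, W1 = 1, and let J = (1/N)·1·1ᵀ. If σ denotes the largest singular value of W - J and σ < 1, then for any positive integer Q and any sequence of vectors γ^{(1)}, ..., γ^{(L)} in ℝ^N with each coordinate in [0,1], the statistic Γ^{(L)} = Σ_{l=1}^L W^{Q(L-l+1)} γ^{(l)} satisfies, for every coordinate index j, |N·e_jᵀΓ^{(L)} - Σ_{l=1}^L Σ_{i=1}^N γ_i^{(l)}| ≤ N^{3/2}·σ^Q/(1 - σ^Q). -/

import Mathlib

open Matrix

theorem consensus_estimation_error_bound (N Q L : ℕ)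
    (hN : 0 < N) (hQ : 0 < Q) (hL : 0 < L)
    (W : Matrix (Fin N) (Fin N) ℝ)
    (hrow : (fun _ => (1 : ℝ)) ᵥ* W = fun _ => (1 : ℝ))
    (hcol : W *ᵥ (fun _ => (1 : ℝ)) = fun _ => (1 : ℝ))
    (J : Matrix (Fin N) (Fin N) ℝ)
    (hJ : J = Matrix.of fun _ _ => (1 : ℝ) / N)
    (σ : ℝ) (hσ0 : 0 < σ) (hσ1 : σ < 1)
    (hop : ∀ x : Fin N → ℝ,
      Real.sqrt (∑ i, ((W - J) *ᵥ x) i ^ 2) ≤ σ * Real.sqrt (∑ i, x i ^ 2))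
    (γ : ℕ → Fin N → ℝ)
    (hγ : ∀ l, ∀ i, γ l i ∈ Set.Icc (0 : ℝ) 1)
    (Γ : Fin N → ℝ)
    (hΓ : Γ = ∑ l ∈ Finset.Icc 1 L, (W ^ (Q * (L - l + 1))) *ᵥ (γ l)) :
    ∀ j : Fin N,
      |(N : ℝ) * Γ j - ∑ l ∈ Finset.Icc 1 L, ∑ i, γ l i|
        ≤ (N : ℝ) ^ ((3 : ℝ) / 2) * σ ^ Q / (1 - σ ^ Q) := by
  intro j
  have hNpos : (0:ℝ) < N := by exact_mod_cast hN
  -- W * J = J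
  have hWJ : W * J = J := by
    ext i k
    have hc := congrFun hcol i
    simp only [Matrix.mulVec, dotProduct, mul_one] at hc
    simp only [hJ, Matrix.mul_apply, Matrix.of_apply, one_div]
    rw [← Finset.sum_mul, hc, one_mul]
  have hJW : J * W = J := by
    ext i k
    have hr := congrFun hrow k
    simp only [Matrix.vecMul, dotProduct, one_mul] at hr
    simp only [hJ, Matrix.mul_apply, Matrix.of_apply, one_div]
    rw [← Finset.mul_sum, hr, mul_one]
  have hJJ : J * J = J := by
    ext i k
    simp [hJ, Matrix.mul_apply, ← Finset.sum_div, Finset.card_univ]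
    field_simp
  -- W ^ n * J = J
  have hWnJ : ∀ n : ℕ, W ^ n * J = J := by
    intro n
    induction n with
    | zero => simp
    | succ m ih => rw [pow_succ, mul_assoc, hWJ, ih]
  -- (W - J)^n = W^n - J for n ≥ 1
  have hpow : ∀ n : ℕ, 1 ≤ n → (W - J) ^ n = W ^ n - J := by
    intro n hn
    induction n with
    | zero => omega
    | succ m ih =>
      rcases Nat.eq_zero_or_pos m with hm | hm
      · subst hm; simp
      · rw [pow_succ, ih hm, sub_mul, mul_sub, mul_sub, hWnJ, hJW, hJJ, ← pow_succ]
        abel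
  -- iterated operator bound
  have hiter : ∀ (n : ℕ) (x : Fin N → ℝ),
      Real.sqrt (∑ i, ((W - J) ^ n *ᵥ x) i ^ 2) ≤ σ ^ n * Real.sqrt (∑ i, x i ^ 2) := by
    intro n
    induction n with
    | zero => intro x; simp [Matrix.one_mulVec]
    | succ m ih =>
      intro x
      have h1 : (W - J) ^ (m + 1) *ᵥ x = (W - J) *ᵥ ((W - J) ^ m *ᵥ x) := by
        rw [pow_succ', Matrix.mulVec_mulVec]
      rw [h1]
      calc Real.sqrt (∑ i, ((W - J) *ᵥ ((W - J) ^ m *ᵥ x)) i ^ 2)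
          ≤ σ * Real.sqrt (∑ i, ((W - J) ^ m *ᵥ x) i ^ 2) := hop _
        _ ≤ σ * (σ ^ m * Real.sqrt (∑ i, x i ^ 2)) := by
            exact mul_le_mul_of_nonneg_left (ih x) hσ0.le
        _ = σ ^ (m + 1) * Real.sqrt (∑ i, x i ^ 2) := by ring
  -- coordinate bound
  have habs : ∀ (x : Fin N → ℝ), |x j| ≤ Real.sqrt (∑ i, x i ^ 2) := by
    intro x
    rw [← Real.sqrt_sq_eq_abs]
    apply Real.sqrt_le_sqrt
    exact Finset.single_le_sum (fun i _ => sq_nonneg (x i)) (Finset.mem_univ j)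
  -- norm of γ l
  have hγnorm : ∀ l, Real.sqrt (∑ i, γ l i ^ 2) ≤ Real.sqrt N := by
    intro l
    apply Real.sqrt_le_sqrt
    calc (∑ i, γ l i ^ 2) ≤ ∑ _i : Fin N, (1:ℝ) := by
          apply Finset.sum_le_sum
          intro i _
          have h := hγ l i
          exact pow_le_one₀ h.1 h.2
      _ = N := by simp
  -- J *ᵥ γ l at j
  have hJv : ∀ l, (J *ᵥ γ l) j = (∑ i, γ l i) / N := by
    intro l
    simp only [hJ, Matrix.mulVec, dotProduct, Matrix.of_apply, one_div]
    rw [← Finset.mul_sum, inv_mul_eq_div]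
  -- rewrite the LHS as a sum of error terms
  have hrew : (N : ℝ) * Γ j - ∑ l ∈ Finset.Icc 1 L, ∑ i, γ l i
      = ∑ l ∈ Finset.Icc 1 L, (N : ℝ) * (((W - J) ^ (Q * (L - l + 1))) *ᵥ γ l) j := by
    rw [hΓ]
    rw [Finset.sum_apply, Finset.mul_sum, ← Finset.sum_sub_distrib]
    apply Finset.sum_congr rfl
    intro l hl
    have hn : 1 ≤ Q * (L - l + 1) := by
      have : 1 ≤ L - l + 1 := Nat.le_add_left 1 _
      exact Nat.one_le_iff_ne_zero.mpr (Nat.mul_ne_zero (by omega) (by omega))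
    rw [hpow _ hn, Matrix.sub_mulVec]
    have : ((W ^ (Q * (L - l + 1)) *ᵥ γ l - J *ᵥ γ l)) j
        = (W ^ (Q * (L - l + 1)) *ᵥ γ l) j - (J *ᵥ γ l) j := rfl
    rw [this, hJv l]
    field_simp
  rw [hrew]
  -- bound each term
  have hterm : ∀ l ∈ Finset.Icc 1 L,
      |(N : ℝ) * (((W - J) ^ (Q * (L - l + 1))) *ᵥ γ l) j|
        ≤ (N : ℝ) ^ ((3 : ℝ) / 2) * (σ ^ Q) ^ (L - l + 1) := by
    intro l hl
    have h1 : |(((W - J) ^ (Q * (L - l + 1))) *ᵥ γ l) j|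
        ≤ σ ^ (Q * (L - l + 1)) * Real.sqrt N := by
      calc |(((W - J) ^ (Q * (L - l + 1))) *ᵥ γ l) j|
          ≤ Real.sqrt (∑ i, (((W - J) ^ (Q * (L - l + 1))) *ᵥ γ l) i ^ 2) := habs _
        _ ≤ σ ^ (Q * (L - l + 1)) * Real.sqrt (∑ i, γ l i ^ 2) := hiter _ _
        _ ≤ σ ^ (Q * (L - l + 1)) * Real.sqrt N := by
            exact mul_le_mul_of_nonneg_left (hγnorm l) (pow_nonneg hσ0.le _)
    have hN32 : (N : ℝ) * Real.sqrt N = (N : ℝ) ^ ((3 : ℝ) / 2) := by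
      rw [Real.sqrt_eq_rpow, show (3:ℝ)/2 = 1 + 1/2 by norm_num,
        Real.rpow_add hNpos, Real.rpow_one]
    calc |(N : ℝ) * (((W - J) ^ (Q * (L - l + 1))) *ᵥ γ l) j|
        = (N : ℝ) * |(((W - J) ^ (Q * (L - l + 1))) *ᵥ γ l) j| := by
          rw [abs_mul, abs_of_nonneg hNpos.le]
      _ ≤ (N : ℝ) * (σ ^ (Q * (L - l + 1)) * Real.sqrt N) :=
          mul_le_mul_of_nonneg_left h1 hNpos.le
      _ = (N : ℝ) * Real.sqrt N * (σ ^ Q) ^ (L - l + 1) := by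
          rw [pow_mul]; ring
      _ = (N : ℝ) ^ ((3 : ℝ) / 2) * (σ ^ Q) ^ (L - l + 1) := by rw [hN32]
  -- geometric sum bound
  set s : ℝ := σ ^ Q with hs
  have hs0 : 0 < s := pow_pos hσ0 Q
  have hs1 : s < 1 := pow_lt_one₀ hσ0.le hσ1 hQ.ne'
  have hgeo : ∑ l ∈ Finset.Icc 1 L, s ^ (L - l + 1) ≤ s / (1 - s) := by
    have hre : ∑ l ∈ Finset.Icc 1 L, s ^ (L - l + 1) = ∑ k ∈ Finset.Icc 1 L, s ^ k := by
      apply Finset.sum_nbij' (fun l => L - l + 1) (fun k => L - k + 1)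
      · intro a ha; simp only [Finset.mem_Icc] at *; omega
      · intro a ha; simp only [Finset.mem_Icc] at *; omega
      · intro a ha; simp only [Finset.mem_Icc] at ha; omega
      · intro a ha; simp only [Finset.mem_Icc] at ha; omega
      · intro a ha; rfl
    rw [hre]
    have hre2 : ∑ k ∈ Finset.Icc 1 L, s ^ k = s * ∑ k ∈ Finset.range L, s ^ k := by
      rw [← Finset.Ico_add_one_right_eq_Icc, Finset.sum_Ico_eq_sum_range]
      rw [Finset.mul_sum]
      norm_num
      apply Finset.sum_congr rfl
      intro k _
      rw [pow_add, pow_one]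
    rw [hre2]
    have hgs : ∑ k ∈ Finset.range L, s ^ k ≤ 1 / (1 - s) := by
      rw [geom_sum_eq (ne_of_lt hs1) L]
      have h1 : (s ^ L - 1) / (s - 1) = (1 - s ^ L) / (1 - s) := by
        rw [div_eq_div_iff (sub_ne_zero.mpr hs1.ne) (sub_ne_zero.mpr hs1.ne')]
        ring
      rw [h1, div_le_div_iff₀ (by linarith) (by linarith)]
      nlinarith [pow_nonneg hs0.le L]
    calc s * ∑ k ∈ Finset.range L, s ^ k ≤ s * (1 / (1 - s)) :=
          mul_le_mul_of_nonneg_left hgs hs0.le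
      _ = s / (1 - s) := by ring
  calc |∑ l ∈ Finset.Icc 1 L, (N : ℝ) * (((W - J) ^ (Q * (L - l + 1))) *ᵥ γ l) j|
      ≤ ∑ l ∈ Finset.Icc 1 L, |(N : ℝ) * (((W - J) ^ (Q * (L - l + 1))) *ᵥ γ l) j| :=
        Finset.abs_sum_le_sum_abs _ _
    _ ≤ ∑ l ∈ Finset.Icc 1 L, (N : ℝ) ^ ((3 : ℝ) / 2) * s ^ (L - l + 1) :=
        Finset.sum_le_sum hterm
    _ = (N : ℝ) ^ ((3 : ℝ) / 2) * ∑ l ∈ Finset.Icc 1 L, s ^ (L - l + 1) := by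
        rw [Finset.mul_sum]
    _ ≤ (N : ℝ) ^ ((3 : ℝ) / 2) * (s / (1 - s)) := by
        apply mul_le_mul_of_nonneg_left hgeo
        positivity
    _ = (N : ℝ) ^ ((3 : ℝ) / 2) * s / (1 - s) := by ring
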